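/- Let S be a semigroup that is a finite disjoint union of free monogenic subsemigroups N_a = ⟨a⟩ (a ∈ A). Fix a ∈ A and x ∈ S, and suppose every set T(a,x,b) = { i : a^i·x ∈ N_b } that is infinite eventually agrees with an arithmetic progression with common difference q_b' = q(a,x,b). Then the sum over those b ∈ A with T(a,x,b) infinite of 1/q(a,x,b) equals 1. -/

import Mathlib

/-- `spow a n` is the `n`-th power of `a` in a semigroup, for `n ≥ 1`
(with the junk value `a` at `n = 0`). -/
def spow {S : Type*} [Semigroup S] (a : S) : ℕ → S
  | 0 => a
  | 1 => a
  | (n + 2) => spow a (n + 1) * a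

/-- The subsemigroup (as a set) generated by `a`: all positive powers of `a`. -/
def Nblock {S : Type*} [Semigroup S] (a : S) : Set S :=
  {x | ∃ i : ℕ, 1 ≤ i ∧ x = spow a i}

open scoped Classical

open Finset in
lemma count_ap (M Q q v : ℕ) (hq : 0 < q) (hd : q ∣ Q) :
    ((Finset.Ico M (M+Q)).filter (fun i => i % q = v % q)).card = Q / q := by
  obtain ⟨k, rfl⟩ := hd
  have h := Nat.Ico_filter_modEq_card M (M + q*k) hq v
  have hp : ((Finset.Ico M (M+q*k)).filter (fun i => i % q = v % q)) =
      {x ∈ Finset.Ico M (M + q*k) | x ≡ v [MOD q]} := by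
    simp [Nat.ModEq]
    exact Finset.filter_congr (fun _ _ => Iff.rfl)
  have hQ : ((M + q*k : ℕ) : ℚ) - v = ((M : ℚ) - v) + (k : ℤ) * q := by push_cast; ring
  rw [hQ, add_div, mul_div_assoc, div_self (by positivity : (q:ℚ) ≠ 0), mul_one] at h
  rw [Int.ceil_add_intCast] at h
  have h2 : (⌈((M:ℚ) - v)/q⌉ + k - ⌈((M:ℚ) - v)/q⌉ : ℤ) = k := by ring
  rw [h2, max_eq_left (Int.ofNat_nonneg k)] at h
  rw [hp, Nat.mul_div_cancel_left k hq]
  exact_mod_cast h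

theorem stmt16 {S : Type*} [Semigroup S] {A : Type*} [Fintype A] (gen : A → S)
    (hcover : ∀ x : S, ∃ a : A, x ∈ Nblock (gen a))
    (hfree : ∀ (a b : A) (i j : ℕ), 1 ≤ i → 1 ≤ j →
      spow (gen a) i = spow (gen b) j → a = b ∧ i = j)
    (a : A) (x : S) (Tnat : A → Set ℕ)
    (hT : ∀ b : A, Tnat b = {i : ℕ | 1 ≤ i ∧ spow (gen a) i * x ∈ Nblock (gen b)})
    (q : A → ℕ)
    (hq : ∀ b : A, (Tnat b).Infinite →
      1 ≤ q b ∧ ∃ p : ℕ, 1 ≤ p ∧ ∀ i : ℕ, p ≤ i → (i ∈ Tnat b ↔ i % q b = p % q b)) :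
    ∑ b : A, (if (Tnat b).Infinite then (1 : ℚ) / (q b : ℚ) else 0) = 1 := by
  -- uniqueness of the block containing each `i ≥ 1`
  have huniq : ∀ i : ℕ, 1 ≤ i → ∃! b : A, i ∈ Tnat b := by
    intro i hi
    obtain ⟨b, hb⟩ := hcover (spow (gen a) i * x)
    have hmem : i ∈ Tnat b := by rw [hT]; exact ⟨hi, hb⟩
    refine ⟨b, hmem, ?_⟩
    intro c hc
    rw [hT] at hc
    obtain ⟨j, hj, hje⟩ := hc.2
    obtain ⟨j', hj', hje'⟩ := hb
    exact (hfree c b j j' hj hj' (hje ▸ hje' ▸ rfl)).1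
  -- choose the eventual period data
  obtain ⟨P, hP⟩ : ∃ P : A → ℕ, ∀ b : A, (Tnat b).Infinite →
      ∀ i : ℕ, P b ≤ i → (i ∈ Tnat b ↔ i % q b = P b % q b) := by
    refine ⟨fun b => if h : (Tnat b).Infinite then Classical.choose (hq b h).2 else 0, ?_⟩
    intro b h
    simp only [dif_pos h]
    exact (Classical.choose_spec (hq b h).2).2
  -- bounds
  obtain ⟨N, hN, hNP⟩ : ∃ N : A → ℕ,
      (∀ b : A, ¬ (Tnat b).Infinite → ∀ i ∈ Tnat b, i ≤ N b) ∧
      (∀ b : A, (Tnat b).Infinite → P b ≤ N b) := by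
    refine ⟨fun b => if (Tnat b).Infinite then P b else sSup (Tnat b), ?_, ?_⟩
    · intro b h i hi
      simp only [if_neg h]
      exact le_csSup (Set.not_infinite.mp h).bddAbove hi
    · intro b h
      simp only [if_pos h, le_refl]
  set M : ℕ := (Finset.univ.sup N) + 1 with hM
  have hMN : ∀ b : A, N b < M := fun b => Nat.lt_succ_of_le (Finset.le_sup (Finset.mem_univ b))
  set I : Finset A := Finset.univ.filter (fun b => (Tnat b).Infinite) with hI
  set Q : ℕ := ∏ b ∈ I, q b with hQdef
  have hdvd : ∀ b ∈ I, q b ∣ Q := fun b hb => Finset.dvd_prod_of_mem q hb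
  have hqpos : ∀ b ∈ I, 0 < q b := fun b hb => (hq b (Finset.mem_filter.mp hb).2).1
  have hQpos : 0 < Q := Finset.prod_pos hqpos
  -- the classifying function
  obtain ⟨f, hf⟩ : ∃ f : ℕ → A, ∀ i : ℕ, 1 ≤ i → i ∈ Tnat (f i) := by
    refine ⟨fun i => if h : 1 ≤ i then (huniq i h).exists.choose else a, ?_⟩
    intro i h
    simp only [dif_pos h]
    exact (huniq i h).exists.choose_spec
  have hf' : ∀ i : ℕ, 1 ≤ i → ∀ b : A, i ∈ Tnat b → f i = b := by
    intro i h b hb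
    obtain ⟨c, hc, hcu⟩ := huniq i h
    rw [hcu (f i) (hf i h), hcu b hb]
  -- fiberwise count
  have hcard := Finset.card_eq_sum_card_fiberwise
    (f := f) (s := Finset.Ico M (M + Q)) (t := Finset.univ) (fun y _ => Finset.mem_univ _)
  rw [Nat.card_Ico, Nat.add_sub_cancel_left] at hcard
  have hfib : ∀ b : A, ((Finset.Ico M (M + Q)).filter (fun i => f i = b)).card
      = if (Tnat b).Infinite then Q / q b else 0 := by
    intro b
    by_cases h : (Tnat b).Infinite
    · rw [if_pos h]
      have hbI : b ∈ I := Finset.mem_filter.mpr ⟨Finset.mem_univ b, h⟩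
      have heq : ((Finset.Ico M (M + Q)).filter (fun i => f i = b))
          = ((Finset.Ico M (M + Q)).filter (fun i => i % q b = P b % q b)) := by
        apply Finset.filter_congr
        intro i hi
        rw [Finset.mem_Ico] at hi
        have h1 : 1 ≤ i := le_trans (Nat.le_add_left 1 _) hi.1
        have hPi : P b ≤ i := le_trans (le_trans (hNP b h) (hMN b).le) hi.1
        constructor
        · intro hfi
          exact (hP b h i hPi).mp (hfi ▸ hf i h1)
        · intro hmod
          exact hf' i h1 b ((hP b h i hPi).mpr hmod)
      rw [heq]
      exact count_ap M Q (q b) (P b) (hqpos b hbI) (hdvd b hbI)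
    · rw [if_neg h, Finset.card_eq_zero, Finset.filter_eq_empty_iff]
      intro i hi
      rw [Finset.mem_Ico] at hi
      intro hfi
      have h1 : 1 ≤ i := le_trans (Nat.le_add_left 1 _) hi.1
      have hib : i ∈ Tnat b := hfi ▸ hf i h1
      exact absurd (lt_of_le_of_lt (hN b h i hib) (hMN b)) (not_lt.mpr hi.1)
  have hQsum : Q = ∑ b ∈ I, Q / q b := by
    rw [Finset.sum_congr rfl (fun b _ => hfib b), ← Finset.sum_filter] at hcard
    exact hcard
  -- final rational computation
  have hQne : (Q : ℚ) ≠ 0 := by exact_mod_cast hQpos.ne'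
  rw [← Finset.sum_filter, ← hI]
  have hterm : ∀ b ∈ I, (1 : ℚ) / (q b : ℚ) = ((Q / q b : ℕ) : ℚ) / (Q : ℚ) := by
    intro b hb
    rw [Nat.cast_div (hdvd b hb) (by exact_mod_cast (hqpos b hb).ne')]
    rw [div_right_comm, div_self hQne]
  rw [Finset.sum_congr rfl hterm, ← Finset.sum_div, ← Nat.cast_sum, ← hQsum, div_self hQne]
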